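/- Define f(u) = (1−e^{−u})/√(1+(1−e^{−u})²) and g(u) = 2·artanh(√2·f(u)) − √2·artanh(f(u)). Then g(u) ≥ u for every u ≥ 0. -/

import Mathlib

open Real

/-- The inverse hyperbolic tangent, `artanh x = (1/2) log ((1+x)/(1−x))`. -/
noncomputable def artanh (x : ℝ) : ℝ := (1 / 2) * Real.log ((1 + x) / (1 - x))

/-- `f u = (1−e^{−u})/√(1+(1−e^{−u})²)`. -/
noncomputable def f (u : ℝ) : ℝ :=
  (1 - Real.exp (-u)) / Real.sqrt (1 + (1 - Real.exp (-u)) ^ 2)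

/-- `g u = 2 artanh(√2 f u) − √2 artanh(f u)`, the geometric complexity of the
two-level reset map with `u = wτ`. -/
noncomputable def g (u : ℝ) : ℝ :=
  2 * _root_.artanh (Real.sqrt 2 * f u) - Real.sqrt 2 * _root_.artanh (f u)

lemma hasDerivAt_artanh {x : ℝ} (hx : |x| < 1) :
    HasDerivAt _root_.artanh (1 / (1 - x ^ 2)) x := by
  obtain ⟨hx1, hx2⟩ := abs_lt.1 hx
  have h1 : 0 < 1 + x := by linarith
  have h2 : 0 < 1 - x := by linarith
  have hlog1 : HasDerivAt (fun y : ℝ => Real.log (1 + y)) (1 / (1 + x)) x := by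
    have := (Real.hasDerivAt_log (ne_of_gt h1)).comp x ((hasDerivAt_id x).const_add 1)
    simpa [Function.comp_def] using this
  have hlog2 : HasDerivAt (fun y : ℝ => Real.log (1 - y)) (-(1 / (1 - x))) x := by
    have := (Real.hasDerivAt_log (ne_of_gt h2)).comp x ((hasDerivAt_id x).const_sub 1)
    simpa [Function.comp_def] using this
  have h : HasDerivAt (fun y : ℝ => (1 / 2) * (Real.log (1 + y) - Real.log (1 - y)))
      ((1 / 2) * (1 / (1 + x) - -(1 / (1 - x)))) x := (hlog1.sub hlog2).const_mul (1 / 2)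
  have heq : _root_.artanh =ᶠ[nhds x] fun y : ℝ => (1 / 2) * (Real.log (1 + y) - Real.log (1 - y)) := by
    have hmem : Set.Ioo (-1 : ℝ) 1 ∈ nhds x := isOpen_Ioo.mem_nhds ⟨hx1, hx2⟩
    filter_upwards [hmem] with y hy
    have hy1 : (0:ℝ) < 1 + y := by linarith [hy.1]
    have hy2 : (0:ℝ) < 1 - y := by linarith [hy.2]
    unfold _root_.artanh
    rw [Real.log_div (ne_of_gt hy1) (ne_of_gt hy2)]
  have hfinal := h.congr_of_eventuallyEq heq
  refine hfinal.congr_deriv ?_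
  have hne : (1:ℝ) - x ^ 2 ≠ 0 := by nlinarith
  field_simp
  ring

set_option maxHeartbeats 1000000 in
lemma g_hasDerivAt {u : ℝ} (hu : 0 ≤ u) : ∃ d, HasDerivAt g d u ∧ 1 ≤ d := by
  set E := Real.exp (-u) with hEdef
  have hEpos : 0 < E := Real.exp_pos _
  have hEle : E ≤ 1 := by
    rw [hEdef]
    calc Real.exp (-u) ≤ Real.exp 0 := Real.exp_le_exp.mpr (by linarith)
    _ = 1 := Real.exp_zero
  set z := 1 - E with hzdef
  have hz0 : 0 ≤ z := by simp [hzdef]; linarith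
  have hz1 : z < 1 := by simp [hzdef]; linarith
  set Q := 1 + z ^ 2 with hQdef
  have hQpos : 0 < Q := by positivity
  set s := Real.sqrt Q with hsdef
  have hs : 0 < s := Real.sqrt_pos.mpr hQpos
  have hs2 : s ^ 2 = Q := Real.sq_sqrt hQpos.le
  have hzs : z < s := by nlinarith
  set r := Real.sqrt 2 with hrdef
  have hr : 0 < r := Real.sqrt_pos.mpr (by norm_num)
  have hr2 : r ^ 2 = 2 := Real.sq_sqrt (by norm_num)
  have hze : (1 : ℝ) - Real.exp (-u) = z := by rw [hzdef, hEdef]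
  have hQe : (1 : ℝ) + (1 - Real.exp (-u)) ^ 2 = Q := by rw [hQdef, hze]
  have hse : Real.sqrt (1 + (1 - Real.exp (-u)) ^ 2) = s := by rw [hQe, hsdef]
  have hfu : f u = z / s := by rw [f, hze, hse]
  have hEz : E = 1 - z := by rw [hzdef]; ring
  -- derivative of the inner function
  have dE : HasDerivAt (fun v : ℝ => 1 - Real.exp (-v)) E u := by
    have h1 : HasDerivAt (fun v : ℝ => -v) (-1) u := (hasDerivAt_id u).neg
    have h2 := (Real.hasDerivAt_exp (-u)).comp u h1
    have h3 := h2.const_sub 1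
    refine h3.congr_deriv ?_
    rw [hEdef]; ring
  have dQ : HasDerivAt (fun v : ℝ => 1 + (1 - Real.exp (-v)) ^ 2) (2 * z * E) u := by
    have := (dE.pow 2).const_add 1
    refine this.congr_deriv ?_
    rw [hze]; push_cast; ring
  have dS : HasDerivAt (fun v : ℝ => Real.sqrt (1 + (1 - Real.exp (-v)) ^ 2)) (z * E / s) u := by
    have hQne : (1 : ℝ) + (1 - Real.exp (-u)) ^ 2 ≠ 0 := by rw [hQe]; exact hQpos.ne'
    have := (Real.hasDerivAt_sqrt hQne).comp u dQ
    refine this.congr_deriv ?_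
    rw [hse]
    field_simp
  have dF : HasDerivAt f (E / s ^ 3) u := by
    have := dE.div dS (by rw [hse]; exact hs.ne')
    have hfeq : ((fun v : ℝ => (1 - Real.exp (-v))) / fun v => Real.sqrt (1 + (1 - Real.exp (-v)) ^ 2)) = f := by
      funext v; rw [f]; rfl
    rw [hfeq, hze, hse] at this
    have hval : (E * s - z * (z * E / s)) / s ^ 2 = E / s ^ 3 := by
      rw [div_eq_div_iff (by positivity) (by positivity)]
      field_simp
      linear_combination hs2 + hQdef
    rwa [hval] at this
  -- bounds on f u
  have hf1 : |f u| < 1 := by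
    rw [hfu, abs_of_nonneg (div_nonneg hz0 hs.le)]
    exact (div_lt_one hs).mpr hzs
  have hrzs : r * z < s := by
    have hsq : (r * z) ^ 2 < s ^ 2 := by nlinarith
    exact lt_of_pow_lt_pow_left₀ 2 hs.le hsq
  have h2f : |r * f u| < 1 := by
    rw [hfu, abs_of_nonneg (mul_nonneg hr.le (div_nonneg hz0 hs.le)), mul_div_assoc']
    exact (div_lt_one hs).mpr hrzs
  -- derivative of g
  have dA1 : HasDerivAt (fun v : ℝ => _root_.artanh (r * f v))
      (1 / (1 - (r * f u) ^ 2) * (r * (E / s ^ 3))) u :=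
    (hasDerivAt_artanh h2f).comp (h := fun v => r * f v) u (dF.const_mul r)
  have dA2 : HasDerivAt (fun v : ℝ => _root_.artanh (f v))
      (1 / (1 - f u ^ 2) * (E / s ^ 3)) u :=
    (hasDerivAt_artanh hf1).comp (h := f) u dF
  have dG : HasDerivAt g
      (2 * (1 / (1 - (r * f u) ^ 2) * (r * (E / s ^ 3))) -
        r * (1 / (1 - f u ^ 2) * (E / s ^ 3))) u := by
    have := (dA1.const_mul 2).sub (dA2.const_mul r)
    exact this
  refine ⟨_, dG, ?_⟩
  -- simplify the derivative to r * s / (1 + z)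
  have hz1' : (0:ℝ) < 1 - z := by linarith
  have hz1p : (0:ℝ) < 1 + z := by linarith
  clear_value r s Q z E
  have e1 : 1 - f u ^ 2 = 1 / s ^ 2 := by
    rw [hfu]
    field_simp
    nlinarith [hs2]
  have e2 : 1 - (r * f u) ^ 2 = (1 - z ^ 2) / s ^ 2 := by
    rw [hfu]
    field_simp
    nlinarith [hs2, hr2]
  have hd : 2 * (1 / (1 - (r * f u) ^ 2) * (r * (E / s ^ 3))) -
      r * (1 / (1 - f u ^ 2) * (E / s ^ 3)) = r * s / (1 + z) := by
    rw [e1, e2, hEz]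
    have h1z2 : (1:ℝ) - z ^ 2 ≠ 0 := by nlinarith
    have hs2' : s ^ 2 = 1 + z ^ 2 := by rw [hs2, hQdef]
    field_simp
    linear_combination (-(1 - z ^ 2)) * hs2'
  rw [hd]
  rw [le_div_iff₀ hz1p]
  have hsq : (1 + z) ^ 2 ≤ (r * s) ^ 2 := by nlinarith [sq_nonneg (1 - z), hr2, hs2]
  have := le_of_pow_le_pow_left₀ (two_ne_zero) (by positivity : (0:ℝ) ≤ r * s) hsq
  linarith

lemma g_zero : g 0 = 0 := by
  have hf0 : f 0 = 0 := by simp [f]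
  rw [g, hf0, mul_zero]
  rw [_root_.artanh]
  norm_num

/-- **Complexity–error trade-off for the two-level reset map:** `g u ≥ u`
for all `u ≥ 0`, i.e. `e^{C(T)} ε(T) ≥ 1` with `ε(T) = e^{−u}`. -/
theorem two_level_complexity_ge (u : ℝ) (hu : 0 ≤ u) : g u ≥ u := by
  have mono : MonotoneOn (fun v => g v - v) (Set.Ici (0:ℝ)) := by
    apply monotoneOn_of_deriv_nonneg (convex_Ici 0)
    · intro x hx
      obtain ⟨d, hd, -⟩ := g_hasDerivAt hx
      exact ((hd.sub (hasDerivAt_id x)).continuousAt).continuousWithinAt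
    · intro x hx
      rw [interior_Ici] at hx
      obtain ⟨d, hd, -⟩ := g_hasDerivAt hx.le
      exact ((hd.sub (hasDerivAt_id x)).differentiableAt).differentiableWithinAt
    · intro x hx
      rw [interior_Ici] at hx
      obtain ⟨d, hd, hd1⟩ := g_hasDerivAt hx.le
      have hD : HasDerivAt (fun v => g v - v) (d - 1) x := hd.sub (hasDerivAt_id x)
      rw [hD.deriv]
      linarith
  have h := mono Set.self_mem_Ici (Set.mem_Ici.mpr hu) hu
  simp only [g_zero] at h
  linarith
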